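/- (Fine–Wilf) Let p and q be nonempty words over an alphabet Σ with |p| = n, |q| = m, and let d = gcd(n, m). If for some natural numbers i and j the powers p^i and q^j have a common prefix of length at least n + m − d, then p and q are powers of a common word of length d; in particular there exists a word r with |r| = d, p ∈ r*, and q ∈ r*. -/

import Mathlib

/-- `wpow v n` is the word `vⁿ`, the `n`-fold concatenation of the word `v` with itself. -/
def wpow {α : Type*} (v : List α) : ℕ → List α
  | 0 => []
  | n + 1 => v ++ wpow v n

/-- A nonempty word `u` is primitive if `u = vⁿ` implies `n = 1`. -/
def Primitive {α : Type*} (u : List α) : Prop :=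
  u ≠ [] ∧ ∀ (v : List α) (n : ℕ), u = wpow v n → n = 1

theorem wpow_length {α : Type*} (v : List α) (s : ℕ) :
    (wpow v s).length = s * v.length := by
  induction s with
  | zero => simp [wpow]
  | succ s ih => simp [wpow, ih, Nat.succ_mul]; ring

theorem wpow_getD {α : Type*} (v : List α) (a : α) (s k : ℕ)
    (h : k < s * v.length) :
    (wpow v s).getD k a = v.getD (k % v.length) a := by
  induction s generalizing k with
  | zero => simp at h
  | succ s ih =>
    rw [Nat.succ_mul] at h
    show (v ++ wpow v s).getD k a = _
    rcases lt_or_ge k v.length with hk | hk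
    · rw [List.getD_append _ _ _ _ hk, Nat.mod_eq_of_lt hk]
    · rw [List.getD_append_right _ _ _ _ hk]
      rw [ih (k - v.length) (by omega)]
      congr 1
      conv_rhs => rw [show k = (k - v.length) + v.length by omega]
      rw [Nat.add_mod_right]

/-- Core Fine–Wilf lemma for functions. -/
theorem fw_aux {α : Type*} (N : ℕ) : ∀ n m, n + m = N → ∀ (L : ℕ) (f : ℕ → α),
    0 < n → 0 < m → n + m - Nat.gcd n m ≤ L →
    (∀ k, k + n < L → f (k + n) = f k) →
    (∀ k, k + m < L → f (k + m) = f k) →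
    ∀ k, k < L → f k = f (k % Nat.gcd n m) := by
  induction N using Nat.strong_induction_on with
  | _ N IH =>
    intro n m hN L f hn0 hm0 hL hfn hfm
    rcases lt_trichotomy n m with hnm | hnm | hnm
    · -- n < m : reduce m to m - n
      have hd : Nat.gcd n (m - n) = Nat.gcd n m := Nat.gcd_sub_self_right hnm.le
      have hdn : Nat.gcd n m ∣ n := Nat.gcd_dvd_left n m
      have hdm : Nat.gcd n m ∣ m := Nat.gcd_dvd_right n m
      have hdln : Nat.gcd n m ≤ n := Nat.le_of_dvd hn0 hdn
      have hdlm : Nat.gcd n m ≤ m := Nat.le_of_dvd hm0 hdm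
      have hdmn : Nat.gcd n m ≤ m - n :=
        Nat.le_of_dvd (by omega) (Nat.dvd_sub hdm hdn)
      have key : ∀ k, k < L - n → f k = f (k % Nat.gcd n m) := by
        have := IH (n + (m - n)) (by omega) n (m - n) rfl (L - n) f hn0 (by omega)
          (by rw [hd]; omega)
          (fun k hk => hfn k (by omega))
          (fun k hk => by
            have h1 : f (k + (m - n) + n) = f (k + (m - n)) := hfn _ (by omega)
            have h2 : k + (m - n) + n = k + m := by omega
            have h3 : f (k + m) = f k := hfm k (by omega)
            rw [← h1, h2, h3])
        intro k hk
        rw [← hd]; exact this k hk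
      -- extend to all k < L by strong induction, jumping down by n
      intro k
      induction k using Nat.strong_induction_on with
      | _ k IHk =>
        intro hk
        rcases lt_or_ge k (L - n) with h | h
        · exact key k h
        · have hkn : n ≤ k := by omega
          have h1 : f ((k - n) + n) = f (k - n) := hfn _ (by omega)
          rw [show (k - n) + n = k by omega] at h1
          have h3 : f (k - n) = f ((k - n) % Nat.gcd n m) := IHk (k - n) (by omega) (by omega)
          have h4 : (k - n) % Nat.gcd n m = k % Nat.gcd n m := by
            obtain ⟨c, hc⟩ := hdn
            conv_rhs => rw [show k = (k - n) + Nat.gcd n m * c by omega]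
            rw [Nat.add_mul_mod_self_left]
          rw [h1, h3, h4]
    · -- n = m
      subst hnm
      rw [Nat.gcd_self] at *
      intro k
      induction k using Nat.strong_induction_on with
      | _ k IHk =>
        intro hk
        rcases lt_or_ge k n with h | h
        · rw [Nat.mod_eq_of_lt h]
        · have h1 : f ((k - n) + n) = f (k - n) := hfn _ (by omega)
          rw [show (k - n) + n = k by omega] at h1
          have h3 : f (k - n) = f ((k - n) % n) := IHk (k - n) (by omega) (by omega)
          have h4 : (k - n) % n = k % n := by
            conv_rhs => rw [show k = (k - n) + n by omega, Nat.add_mod_right]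
          rw [h1, h3, h4]
    · -- m < n : reduce n to n - m
      have hd : Nat.gcd (n - m) m = Nat.gcd n m := Nat.gcd_sub_self_left hnm.le
      have hdn : Nat.gcd n m ∣ n := Nat.gcd_dvd_left n m
      have hdm : Nat.gcd n m ∣ m := Nat.gcd_dvd_right n m
      have hdln : Nat.gcd n m ≤ n := Nat.le_of_dvd hn0 hdn
      have hdlm : Nat.gcd n m ≤ m := Nat.le_of_dvd hm0 hdm
      have hdmn : Nat.gcd n m ≤ n - m :=
        Nat.le_of_dvd (by omega) (Nat.dvd_sub hdn hdm)
      have key : ∀ k, k < L - m → f k = f (k % Nat.gcd n m) := by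
        have := IH ((n - m) + m) (by omega) (n - m) m rfl (L - m) f (by omega) hm0
          (by rw [hd]; omega)
          (fun k hk => by
            have h1 : f (k + (n - m) + m) = f (k + (n - m)) := hfm _ (by omega)
            have h2 : k + (n - m) + m = k + n := by omega
            have h3 : f (k + n) = f k := hfn k (by omega)
            rw [← h1, h2, h3])
          (fun k hk => hfm k (by omega))
        intro k hk
        rw [← hd]; exact this k hk
      intro k
      induction k using Nat.strong_induction_on with
      | _ k IHk =>
        intro hk
        rcases lt_or_ge k (L - m) with h | h
        · exact key k h
        · have hkm : m ≤ k := by omega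
          have h1 : f ((k - m) + m) = f (k - m) := hfm _ (by omega)
          rw [show (k - m) + m = k by omega] at h1
          have h3 : f (k - m) = f ((k - m) % Nat.gcd n m) := IHk (k - m) (by omega) (by omega)
          have h4 : (k - m) % Nat.gcd n m = k % Nat.gcd n m := by
            obtain ⟨c, hc⟩ := hdm
            conv_rhs => rw [show k = (k - m) + Nat.gcd n m * c by omega]
            rw [Nat.add_mul_mod_self_left]
          rw [h1, h3, h4]

/-- If every letter of `w` agrees with `u.getD (· % d)`, then `w` is a power of `u.take d`. -/
theorem eq_wpow_take {α : Type*} (a : α) (u w : List α) (d : ℕ) (hd0 : 0 < d)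
    (hdw : d ∣ w.length) (hdu : d ≤ u.length)
    (hagree : ∀ t, t < w.length → w.getD t a = u.getD (t % d) a) :
    w = wpow (u.take d) (w.length / d) := by
  have hr : (u.take d).length = d := by
    rw [List.length_take]; omega
  have hlen : (wpow (u.take d) (w.length / d)).length = w.length := by
    rw [wpow_length, hr, Nat.div_mul_cancel hdw]
  apply List.ext_getElem (by rw [hlen])
  intro t ht1 ht2
  have htw : t < w.length := ht1
  have hmul : t < (w.length / d) * (u.take d).length := by
    rw [hr, Nat.div_mul_cancel hdw]; exact htw
  have h2 : (wpow (u.take d) (w.length / d))[t] = (u.take d).getD (t % (u.take d).length) a := by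
    rw [← List.getD_eq_getElem _ a (by rw [hlen]; exact htw)]
    exact wpow_getD _ a _ t hmul
  have htd : t % d < d := Nat.mod_lt _ hd0
  have h3 : (u.take d).getD (t % (u.take d).length) a = u.getD (t % d) a := by
    rw [hr, List.getD_eq_getElem _ a (by rw [hr]; exact htd),
      List.getD_eq_getElem _ a (by omega)]
    exact List.getElem_take
  rw [h2, h3, ← hagree t htw, List.getD_eq_getElem _ a htw]

/-- Fine–Wilf: if powers `pⁱ` and `qʲ` of nonempty words `p, q` have a common prefix of
length at least `|p| + |q| - gcd(|p|,|q|)`, then `p` and `q` are powers of a common word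
of length `gcd(|p|,|q|)`. -/
theorem fine_wilf {α : Type*} (p q : List α) (hp : p ≠ []) (hq : q ≠ [])
    (i j : ℕ) (u : List α)
    (hlen : p.length + q.length - Nat.gcd p.length q.length ≤ u.length)
    (hup : u <+: wpow p i) (huq : u <+: wpow q j) :
    ∃ r : List α, r.length = Nat.gcd p.length q.length ∧
      (∃ k : ℕ, p = wpow r k) ∧ (∃ l : ℕ, q = wpow r l) := by
  have hn0 : 0 < p.length := List.length_pos_iff.mpr hp
  have hm0 : 0 < q.length := List.length_pos_iff.mpr hq
  set d := Nat.gcd p.length q.length with hdd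
  have hd0 : 0 < d := Nat.gcd_pos_of_pos_left _ hn0
  have hdn : d ∣ p.length := Nat.gcd_dvd_left _ _
  have hdm : d ∣ q.length := Nat.gcd_dvd_right _ _
  have hdln : d ≤ p.length := Nat.le_of_dvd hn0 hdn
  have hdlm : d ≤ q.length := Nat.le_of_dvd hm0 hdm
  have hnL : p.length ≤ u.length := by omega
  have hmL : q.length ≤ u.length := by omega
  have hdu : d ≤ u.length := by omega
  have a : α := p.head hp
  have hupl : u.length ≤ i * p.length := by
    have := hup.length_le; rwa [wpow_length] at this
  have huql : u.length ≤ j * q.length := by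
    have := huq.length_le; rwa [wpow_length] at this
  set f : ℕ → α := fun k => u.getD k a with hf
  have hfp : ∀ k, k < u.length → f k = p.getD (k % p.length) a := by
    intro k hk
    have hki : k < i * p.length := lt_of_lt_of_le hk hupl
    have h1 : u.getD k a = (wpow p i).getD k a := by
      rw [List.getD_eq_getElem _ _ hk,
        List.getD_eq_getElem _ _ (by rw [wpow_length]; exact hki)]
      exact hup.getElem hk
    rw [hf]; simp only
    rw [h1, wpow_getD p a i k hki]
  have hfq : ∀ k, k < u.length → f k = q.getD (k % q.length) a := by
    intro k hk
    have hkj : k < j * q.length := lt_of_lt_of_le hk huql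
    have h1 : u.getD k a = (wpow q j).getD k a := by
      rw [List.getD_eq_getElem _ _ hk,
        List.getD_eq_getElem _ _ (by rw [wpow_length]; exact hkj)]
      exact huq.getElem hk
    rw [hf]; simp only
    rw [h1, wpow_getD q a j k hkj]
  have hper : ∀ k, k < u.length → f k = f (k % d) := by
    apply fw_aux (p.length + q.length) p.length q.length rfl u.length f hn0 hm0 hlen
    · intro k hk
      rw [hfp _ hk, hfp _ (by omega), Nat.add_mod_right]
    · intro k hk
      rw [hfq _ hk, hfq _ (by omega), Nat.add_mod_right]
  have hagp : ∀ t, t < p.length → p.getD t a = u.getD (t % d) a := by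
    intro t ht
    have e1 : p.getD t a = f t := by
      rw [hfp t (by omega), Nat.mod_eq_of_lt ht]
    rw [e1, hper t (by omega)]
  have hagq : ∀ t, t < q.length → q.getD t a = u.getD (t % d) a := by
    intro t ht
    have e1 : q.getD t a = f t := by
      rw [hfq t (by omega), Nat.mod_eq_of_lt ht]
    rw [e1, hper t (by omega)]
  refine ⟨u.take d, by rw [List.length_take]; omega, ⟨p.length / d, ?_⟩, ⟨q.length / d, ?_⟩⟩
  · exact eq_wpow_take a u p d hd0 hdn hdu hagp
  · exact eq_wpow_take a u q d hd0 hdm hdu hagq
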